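/- For any signed permutation π all of whose elements are positive and any signed prefix or suffix reversal ρ̄ (i.e., ρ̄(1,j) with j < n, or ρ̄(i,n) with i > 1), the number of signed reversal fragmentation breakpoints removed by ρ̄ is strictly less than 1, i.e., ρ̄ removes no fragmentation breakpoints: b^f(π·ρ̄) ≥ b^f(π). -/

import Mathlib

/-- Signed permutation of `{1,…,n}` (no extension): the absolute values of
`p 1, …, p n` are a bijection onto `{1,…,n}`. -/
def IsSignedPerm (n : ℕ) (p : ℕ → ℤ) : Prop :=
  (∀ i, 1 ≤ i → i ≤ n → 1 ≤ |p i| ∧ |p i| ≤ (n : ℤ)) ∧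
  (∀ i j, 1 ≤ i → i ≤ n → 1 ≤ j → j ≤ n → |p i| = |p j| → i = j)

/-- Number of transposition (= signed reversal) fragmentation breakpoints:
pairs `(p i, p (i+1))`, `1 ≤ i < n`, with `p (i+1) - p i ≠ 1` (no extension). -/
def fbT (n : ℕ) (p : ℕ → ℤ) : ℕ :=
  ((Finset.Ico 1 n).filter (fun i => p (i+1) - p i ≠ 1)).card

/-- The signed reversal ρ̄(i,j): replaces `p_i … p_j` by `-p_j … -p_i`. -/
def applySR (p : ℕ → ℤ) (i j : ℕ) : ℕ → ℤ := fun l =>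
  if i ≤ l ∧ l ≤ j then -p (i + j - l) else p l

theorem stmt13 (n : ℕ) (p : ℕ → ℤ) (hp : IsSignedPerm n p)
    (hpos : ∀ i, 1 ≤ i → i ≤ n → 0 < p i)
    (i j : ℕ) (hi : 1 ≤ i) (hij : i ≤ j) (hj : j ≤ n)
    (hps : (i = 1 ∧ j < n) ∨ (1 < i ∧ j = n)) :
    fbT n (applySR p i j) ≥ fbT n p := by
  unfold fbT
  apply Finset.card_le_card_of_injOn (fun l => if i ≤ l ∧ l < j then i + j - 1 - l else l)
  · intro l hl
    simp only [Finset.mem_coe, Finset.mem_filter, Finset.mem_Ico] at hl ⊢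
    obtain ⟨⟨hl1, hln⟩, hbp⟩ := hl
    by_cases hc : i ≤ l ∧ l < j
    · rw [if_pos hc]
      obtain ⟨hcl, hcr⟩ := hc
      refine ⟨⟨by omega, by omega⟩, ?_⟩
      have h1 : applySR p i j (i + j - 1 - l + 1) = -p l := by
        unfold applySR
        rw [if_pos (by omega)]
        have : i + j - (i + j - 1 - l + 1) = l := by omega
        rw [this]
      have h2 : applySR p i j (i + j - 1 - l) = -p (l + 1) := by
        unfold applySR
        rw [if_pos (by omega)]
        have : i + j - (i + j - 1 - l) = l + 1 := by omega
        rw [this]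
      rw [h1, h2]
      intro h
      apply hbp
      linarith
    · rw [if_neg hc]
      refine ⟨⟨hl1, hln⟩, ?_⟩
      push_neg at hc
      by_cases h1 : l < i
      · by_cases h2 : l + 1 < i
        · have e1 : applySR p i j l = p l := by unfold applySR; rw [if_neg (by omega)]
          have e2 : applySR p i j (l + 1) = p (l + 1) := by
            unfold applySR; rw [if_neg (by omega)]
          rw [e1, e2]; exact hbp
        · -- l = i - 1 ≥ 1, so 1 < i, hence (by hps) j = n
          have hl' : l + 1 = i := by omega
          have hkey : 1 < i ∧ j = n := by
            rcases hps with ⟨h, _⟩ | h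
            · omega
            · exact h
          obtain ⟨h1', hjn⟩ := hkey
          have e1 : applySR p i j l = p l := by unfold applySR; rw [if_neg (by omega)]
          have e2 : applySR p i j (l + 1) = -p j := by
            unfold applySR
            rw [if_pos (by omega)]
            have : i + j - (l + 1) = j := by omega
            rw [this]
          rw [e1, e2]
          have hpj : 0 < p j := hpos j (by omega) hj
          have hpl : 0 < p l := hpos l hl1 (by omega)
          intro h; linarith
      · have hlj : j ≤ l := hc (by omega)
        by_cases h2 : l = j
        · -- l = j < n, hence (by hps) i = 1
          have hkey : i = 1 ∧ j < n := by
            rcases hps with h | ⟨_, h⟩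
            · exact h
            · omega
          obtain ⟨hi1, hjn⟩ := hkey
          have e1 : applySR p i j l = -p i := by
            unfold applySR
            rw [if_pos (by omega)]
            have : i + j - l = i := by omega
            rw [this]
          have e2 : applySR p i j (l + 1) = p (l + 1) := by
            unfold applySR; rw [if_neg (by omega)]
          rw [e1, e2]
          have hpi : 0 < p i := hpos i hi (by omega)
          have hpl : 0 < p (l + 1) := hpos (l + 1) (by omega) (by omega)
          intro h; linarith
        · have e1 : applySR p i j l = p l := by unfold applySR; rw [if_neg (by omega)]
          have e2 : applySR p i j (l + 1) = p (l + 1) := by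
            unfold applySR; rw [if_neg (by omega)]
          rw [e1, e2]; exact hbp
  · intro a ha b hb hab
    simp only [Finset.mem_coe, Finset.mem_filter, Finset.mem_Ico] at ha hb
    simp only at hab
    split_ifs at hab <;> omega
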